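/- The set P := {x ∈ [0,1]^4 | max(x 0, x 1) = max(x 2, x 3)} (a subset of Fin 4 → ℝ) is homeomorphic to the closed unit ball in three-dimensional Euclidean space. (This is the paper's example of the closed cell in W_{40}^W cut out by the coherence condition max(a,b) = max(c,d) on the four edge-lengths, which has the topological type of a square pyramid.) -/

import Mathlib

open Metric Set

noncomputable section Stmt17Aux

/-- The pyramid in `EuclideanSpace ℝ (Fin 3)`. -/
def Qpyr : Set (EuclideanSpace ℝ (Fin 3)) :=
  {p | 0 ≤ p 0 ∧ p 0 ≤ 1 ∧ |p 1| ≤ p 0 ∧ |p 2| ≤ p 0}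

lemma Qpyr_convex : Convex ℝ Qpyr := by
  rintro p ⟨hp0, hp1, hp2, hp3⟩ q ⟨hq0, hq1, hq2, hq3⟩ a b ha hb hab
  have e : ∀ i, (a • p + b • q) i = a * p i + b * q i := fun i => rfl
  rw [abs_le] at hp2 hp3 hq2 hq3
  refine ⟨?_, ?_, ?_, ?_⟩ <;> simp only [e]
  · nlinarith
  · nlinarith
  · rw [abs_le]; constructor <;> nlinarith [hp2.1, hp2.2, hq2.1, hq2.2]
  · rw [abs_le]; constructor <;> nlinarith [hp3.1, hp3.2, hq3.1, hq3.2]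

lemma Qpyr_closed : IsClosed Qpyr := by
  have c0 : Continuous fun p : EuclideanSpace ℝ (Fin 3) => p 0 := (EuclideanSpace.proj 0).continuous
  have c1 : Continuous fun p : EuclideanSpace ℝ (Fin 3) => p 1 := (EuclideanSpace.proj 1).continuous
  have c2 : Continuous fun p : EuclideanSpace ℝ (Fin 3) => p 2 := (EuclideanSpace.proj 2).continuous
  exact (isClosed_le continuous_const c0).inter <| (isClosed_le c0 continuous_const).inter <|
    (isClosed_le c1.abs c0).inter (isClosed_le c2.abs c0)

lemma Qpyr_bounded : Bornology.IsBounded Qpyr := by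
  refine (Metric.isBounded_iff_subset_closedBall 0).mpr ⟨2, fun p hp => ?_⟩
  obtain ⟨h0, h1, h2, h3⟩ := hp
  have e0 : ‖p 0‖ ^ 2 ≤ 1 := by
    rw [Real.norm_eq_abs, abs_of_nonneg h0]; nlinarith
  have e1 : ‖p 1‖ ^ 2 ≤ 1 := by
    rw [Real.norm_eq_abs]; nlinarith [abs_nonneg (p 1)]
  have e2 : ‖p 2‖ ^ 2 ≤ 1 := by
    rw [Real.norm_eq_abs]; nlinarith [abs_nonneg (p 2)]
  simp only [mem_closedBall, dist_zero_right]
  rw [EuclideanSpace.norm_eq]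
  have hsum : ∑ i : Fin 3, ‖p i‖ ^ 2 ≤ 3 := by
    rw [Fin.sum_univ_three]; linarith
  calc Real.sqrt (∑ i, ‖p i‖ ^ 2) ≤ Real.sqrt 4 := Real.sqrt_le_sqrt (by linarith)
    _ ≤ 2 := by rw [show (4:ℝ) = 2^2 by norm_num, Real.sqrt_sq]; norm_num

lemma Qpyr_interior_nonempty : (interior Qpyr).Nonempty := by
  have c0 : Continuous fun p : EuclideanSpace ℝ (Fin 3) => p 0 := (EuclideanSpace.proj 0).continuous
  have c1 : Continuous fun p : EuclideanSpace ℝ (Fin 3) => p 1 := (EuclideanSpace.proj 1).continuous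
  have c2 : Continuous fun p : EuclideanSpace ℝ (Fin 3) => p 2 := (EuclideanSpace.proj 2).continuous
  have hU : IsOpen {p : EuclideanSpace ℝ (Fin 3) | 0 < p 0 ∧ p 0 < 1 ∧ |p 1| < p 0 ∧ |p 2| < p 0} :=
    (isOpen_lt continuous_const c0).inter <| (isOpen_lt c0 continuous_const).inter <|
      (isOpen_lt c1.abs c0).inter (isOpen_lt c2.abs c0)
  refine ⟨(EuclideanSpace.equiv (Fin 3) ℝ).symm ![1/2, 0, 0], ?_⟩
  rw [mem_interior]
  refine ⟨_, fun p hp => ⟨le_of_lt hp.1, le_of_lt hp.2.1, le_of_lt hp.2.2.1,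
    le_of_lt hp.2.2.2⟩, hU, ?_⟩
  constructor
  · norm_num [EuclideanSpace.equiv]
  refine ⟨by norm_num [EuclideanSpace.equiv], ?_, ?_⟩ <;> norm_num [EuclideanSpace.equiv] <;>
    exact (show |(0:ℝ)| < 1/2 by norm_num)

/-- The set `P`. -/
def Pset : Set (Fin 4 → ℝ) :=
  {x | (∀ i, 0 ≤ x i ∧ x i ≤ 1) ∧ max (x 0) (x 1) = max (x 2) (x 3)}

def fwd (x : Fin 4 → ℝ) : EuclideanSpace ℝ (Fin 3) :=
  (EuclideanSpace.equiv (Fin 3) ℝ).symm ![max (x 0) (x 1), x 0 - x 1, x 2 - x 3]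

def bwd (p : EuclideanSpace ℝ (Fin 3)) : Fin 4 → ℝ :=
  ![p 0 + min (p 1) 0, p 0 - max (p 1) 0, p 0 + min (p 2) 0, p 0 - max (p 2) 0]

lemma fwd_apply (x : Fin 4 → ℝ) :
    fwd x 0 = max (x 0) (x 1) ∧ fwd x 1 = x 0 - x 1 ∧ fwd x 2 = x 2 - x 3 := by
  refine ⟨rfl, rfl, rfl⟩

lemma fwd_mem (x : Fin 4 → ℝ) (hx : x ∈ Pset) : fwd x ∈ Qpyr := by
  obtain ⟨hr, hm⟩ := hx
  obtain ⟨h0, h1, h2⟩ := fwd_apply x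
  have r0 := hr 0; have r1 := hr 1; have r2 := hr 2; have r3 := hr 3
  have l01 := le_max_left (x 0) (x 1)
  have r01 := le_max_right (x 0) (x 1)
  have l23 := le_max_left (x 2) (x 3)
  have r23 := le_max_right (x 2) (x 3)
  refine ⟨?_, ?_, ?_, ?_⟩ <;> rw [h0]
  · exact le_max_of_le_left r0.1
  · exact max_le r0.2 r1.2
  · rw [h1, abs_le]; constructor <;> linarith
  · rw [h2, abs_le, hm]; constructor <;> linarith

lemma bwd_mem (p : EuclideanSpace ℝ (Fin 3)) (hp : p ∈ Qpyr) : bwd p ∈ Pset := by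
  obtain ⟨h0, h1, h2, h3⟩ := hp
  rw [abs_le] at h2 h3
  have key : ∀ s : ℝ, -(p 0) ≤ s → s ≤ p 0 →
      (0 ≤ p 0 + min s 0 ∧ p 0 + min s 0 ≤ 1) ∧ (0 ≤ p 0 - max s 0 ∧ p 0 - max s 0 ≤ 1) ∧
      max (p 0 + min s 0) (p 0 - max s 0) = p 0 := by
    intro s hs1 hs2
    rcases le_total s 0 with h | h
    · rw [min_eq_left h, max_eq_right h]
      refine ⟨⟨by linarith, by linarith⟩, ⟨by linarith, by linarith⟩, ?_⟩
      rw [max_eq_right (by linarith), sub_zero]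
    · rw [min_eq_right h, max_eq_left h]
      refine ⟨⟨by linarith, by linarith⟩, ⟨by linarith, by linarith⟩, ?_⟩
      rw [max_eq_left (by linarith), add_zero]
  obtain ⟨k1a, k1b, k1c⟩ := key (p 1) h2.1 h2.2
  obtain ⟨k2a, k2b, k2c⟩ := key (p 2) h3.1 h3.2
  refine ⟨fun i => ?_, ?_⟩
  · fin_cases i
    · show 0 ≤ p 0 + min (p 1) 0 ∧ p 0 + min (p 1) 0 ≤ 1; exact k1a
    · show 0 ≤ p 0 - max (p 1) 0 ∧ p 0 - max (p 1) 0 ≤ 1; exact k1b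
    · show 0 ≤ p 0 + min (p 2) 0 ∧ p 0 + min (p 2) 0 ≤ 1; exact k2a
    · show 0 ≤ p 0 - max (p 2) 0 ∧ p 0 - max (p 2) 0 ≤ 1; exact k2b
  · show max (bwd p 0) (bwd p 1) = max (bwd p 2) (bwd p 3)
    simp only [bwd]
    show max (p 0 + min (p 1) 0) (p 0 - max (p 1) 0) = max (p 0 + min (p 2) 0) (p 0 - max (p 2) 0)
    rw [k1c, k2c]

lemma bwd_fwd (x : Fin 4 → ℝ) (hx : x ∈ Pset) : bwd (fwd x) = x := by
  obtain ⟨hr, hm⟩ := hx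
  obtain ⟨h0, h1, h2⟩ := fwd_apply x
  have r0 := hr 0; have r1 := hr 1; have r2 := hr 2; have r3 := hr 3
  funext i
  have e0 : bwd (fwd x) 0 = max (x 0) (x 1) + min (x 0 - x 1) 0 := by rw [← h0, ← h1]; rfl
  have e1 : bwd (fwd x) 1 = max (x 0) (x 1) - max (x 0 - x 1) 0 := by rw [← h0, ← h1]; rfl
  have e2 : bwd (fwd x) 2 = max (x 0) (x 1) + min (x 2 - x 3) 0 := by rw [← h0, ← h2]; rfl
  have e3 : bwd (fwd x) 3 = max (x 0) (x 1) - max (x 2 - x 3) 0 := by rw [← h0, ← h2]; rfl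
  fin_cases i
  · show bwd (fwd x) 0 = x 0
    rw [e0]; rcases le_total (x 0) (x 1) with h | h
    · rw [max_eq_right h, min_eq_left (by linarith)]; ring
    · rw [max_eq_left h, min_eq_right (by linarith)]; ring
  · show bwd (fwd x) 1 = x 1
    rw [e1]; rcases le_total (x 0) (x 1) with h | h
    · rw [max_eq_right h, max_eq_right (by linarith)]; ring
    · rw [max_eq_left h, max_eq_left (by linarith)]; ring
  · show bwd (fwd x) 2 = x 2
    rw [e2, hm]; rcases le_total (x 2) (x 3) with h | h
    · rw [max_eq_right h, min_eq_left (by linarith)]; ring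
    · rw [max_eq_left h, min_eq_right (by linarith)]; ring
  · show bwd (fwd x) 3 = x 3
    rw [e3, hm]; rcases le_total (x 2) (x 3) with h | h
    · rw [max_eq_right h, max_eq_right (by linarith)]; ring
    · rw [max_eq_left h, max_eq_left (by linarith)]; ring

lemma fwd_bwd (p : EuclideanSpace ℝ (Fin 3)) (hp : p ∈ Qpyr) : fwd (bwd p) = p := by
  obtain ⟨h0, h1, h2, h3⟩ := hp
  rw [abs_le] at h2 h3
  have key : ∀ s : ℝ, -(p 0) ≤ s → s ≤ p 0 →
      max (p 0 + min s 0) (p 0 - max s 0) = p 0 ∧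
      (p 0 + min s 0) - (p 0 - max s 0) = s := by
    intro s hs1 hs2
    rcases le_total s 0 with h | h
    · rw [min_eq_left h, max_eq_right h]
      exact ⟨by rw [max_eq_right (by linarith), sub_zero], by ring⟩
    · rw [min_eq_right h, max_eq_left h]
      exact ⟨by rw [max_eq_left (by linarith), add_zero], by ring⟩
  obtain ⟨k1, k1'⟩ := key (p 1) h2.1 h2.2
  obtain ⟨k2, k2'⟩ := key (p 2) h3.1 h3.2
  have b0 : bwd p 0 = p 0 + min (p 1) 0 := rfl
  have b1 : bwd p 1 = p 0 - max (p 1) 0 := rfl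
  have b2 : bwd p 2 = p 0 + min (p 2) 0 := rfl
  have b3 : bwd p 3 = p 0 - max (p 2) 0 := rfl
  ext i
  obtain ⟨f0, f1, f2⟩ := fwd_apply (bwd p)
  fin_cases i
  · show fwd (bwd p) 0 = p 0
    rw [f0, b0, b1, k1]
  · show fwd (bwd p) 1 = p 1
    rw [f1, b0, b1, k1']
  · show fwd (bwd p) 2 = p 2
    rw [f2, b2, b3, k2']

lemma fwd_continuous : Continuous fwd := by
  refine (EuclideanSpace.equiv (Fin 3) ℝ).symm.continuous.comp ?_
  refine continuous_pi fun i => ?_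
  fin_cases i
  · exact ((continuous_apply 0).max (continuous_apply 1))
  · exact ((continuous_apply 0).sub (continuous_apply 1))
  · exact ((continuous_apply 2).sub (continuous_apply 3))

lemma bwd_continuous : Continuous bwd := by
  have c : ∀ i : Fin 3, Continuous fun p : EuclideanSpace ℝ (Fin 3) => p i :=
    fun i => (EuclideanSpace.proj i).continuous
  refine continuous_pi fun i => ?_
  fin_cases i
  · exact (c 0).add ((c 1).min continuous_const)
  · exact (c 0).sub ((c 1).max continuous_const)
  · exact (c 0).add ((c 2).min continuous_const)
  · exact (c 0).sub ((c 2).max continuous_const)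

/-- The homeomorphism `P ≃ₜ Q`. -/
def PQhomeo : Pset ≃ₜ Qpyr where
  toFun x := ⟨fwd x, fwd_mem x x.2⟩
  invFun p := ⟨bwd p, bwd_mem p p.2⟩
  left_inv x := Subtype.ext (bwd_fwd x x.2)
  right_inv p := Subtype.ext (fwd_bwd p p.2)
  continuous_toFun := (fwd_continuous.comp continuous_subtype_val).subtype_mk _
  continuous_invFun := (bwd_continuous.comp continuous_subtype_val).subtype_mk _

end Stmt17Aux

/-- the subset `P = {x ∈ [0,1]^4 | max (x 0) (x 1) = max (x 2) (x 3)}` of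
`Fin 4 → ℝ` is homeomorphic to the closed unit ball in 3-dimensional Euclidean space. -/
theorem stmt17 :
    Nonempty
      (({x : Fin 4 → ℝ | (∀ i, 0 ≤ x i ∧ x i ≤ 1) ∧
          max (x 0) (x 1) = max (x 2) (x 3)} : Set (Fin 4 → ℝ)) ≃ₜ
        (Metric.closedBall (0 : EuclideanSpace ℝ (Fin 3)) 1)) := by
  obtain ⟨h, -, hcl, -⟩ := exists_homeomorph_image_interior_closure_frontier_eq_unitBall
    Qpyr_convex Qpyr_interior_nonempty Qpyr_bounded
  rw [Qpyr_closed.closure_eq] at hcl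
  exact ⟨PQhomeo.trans ((h.image Qpyr).trans (Homeomorph.setCongr hcl))⟩
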